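/- arXiv:1606.03580 — 2 statements merged into one kernel-verified Lean document; each statement's English description precedes it below -/
import Mathlib

section
/- For any f̄, ḡ ∈ L²(0,1), the boundary value problem p̄(x) + ū'(x) = f̄(x), ū(x) + p̄'(x) = ḡ(x) on (0,1) with boundary conditions ū(0) = ū(1) = 0 has a unique solution (p̄, ū) ∈ H¹(0,1) × H¹₀(0,1). -/
open MeasureTheory

/-- `(p, u, dp, du)` is a solution of the resolvent boundary value problem
`p + u' = f`, `u + p' = g` on `(0,1)` with `u(0) = u(1) = 0`, where `p, u` are
absolutely continuous on `[0,1]` with weak derivatives `dp, du ∈ L²(0,1)`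
(so `(p,u) ∈ H¹(0,1) × H¹₀(0,1)`). -/
def IsResolventSol (f g p u dp du : ℝ → ℝ) : Prop :=
  MemLp dp 2 (volume.restrict (Set.Ioo (0:ℝ) 1)) ∧
  MemLp du 2 (volume.restrict (Set.Ioo (0:ℝ) 1)) ∧
  IntervalIntegrable dp volume 0 1 ∧
  IntervalIntegrable du volume 0 1 ∧
  (∀ x ∈ Set.Icc (0:ℝ) 1, p x = p 0 + ∫ t in (0:ℝ)..x, dp t) ∧
  (∀ x ∈ Set.Icc (0:ℝ) 1, u x = u 0 + ∫ t in (0:ℝ)..x, du t) ∧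
  (∀ᵐ x ∂(volume.restrict (Set.Ioo (0:ℝ) 1)), p x + du x = f x) ∧
  (∀ᵐ x ∂(volume.restrict (Set.Ioo (0:ℝ) 1)), u x + dp x = g x) ∧
  u 0 = 0 ∧ u 1 = 0

namespace ResolventAux

lemma finite_restrict : IsFiniteMeasure (volume.restrict (Set.Ioo (0:ℝ) 1)) := by
  constructor
  rw [Measure.restrict_apply_univ]
  simp [Real.volume_Ioo]

lemma l2_ii {f : ℝ → ℝ} (hf : MemLp f 2 (volume.restrict (Set.Ioo (0:ℝ) 1))) :
    IntervalIntegrable f volume 0 1 := by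
  haveI := finite_restrict
  have h1 : MemLp f 1 (volume.restrict (Set.Ioo (0:ℝ) 1)) :=
    hf.mono_exponent (by norm_num)
  have h2 : IntegrableOn f (Set.Ioo 0 1) volume := memLp_one_iff_integrable.mp h1
  rw [intervalIntegrable_iff_integrableOn_Ioo_of_le zero_le_one]
  exact h2

lemma mem_of_contOn {p : ℝ → ℝ} (hp : ContinuousOn p (Set.Icc (0:ℝ) 1)) :
    MemLp p 2 (volume.restrict (Set.Ioo (0:ℝ) 1)) := by
  haveI := finite_restrict
  obtain ⟨C, hC⟩ := isCompact_Icc.exists_bound_of_continuousOn hp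
  refine MemLp.of_bound
    ((hp.mono Set.Ioo_subset_Icc_self).aestronglyMeasurable measurableSet_Ioo) C ?_
  exact (ae_restrict_mem measurableSet_Ioo).mono fun x hx => hC x (Set.Ioo_subset_Icc_self hx)

lemma triangle {F : ℝ → ℝ} (hF : IntegrableOn F (Set.Ioc (0:ℝ) 1)) (a : ℝ) {x : ℝ}
    (hx : x ∈ Set.Icc (0:ℝ) 1) :
    (∫ t in (0:ℝ)..x, (a * Real.exp (a*t)) * ∫ s in (0:ℝ)..t, F s)
      = ∫ s in (0:ℝ)..x, (Real.exp (a*x) - Real.exp (a*s)) * F s := by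
  obtain ⟨hx0, hx1⟩ := hx
  have hFx : IntegrableOn F (Set.Ioc 0 x) := hF.mono_set (Set.Ioc_subset_Ioc_right hx1)
  set μx := volume.restrict (Set.Ioc (0:ℝ) x) with hμx
  have hD : MeasurableSet {q : ℝ × ℝ | q.2 ≤ q.1} :=
    measurableSet_le measurable_snd measurable_fst
  have hcont : Continuous fun t : ℝ => a * Real.exp (a*t) :=
    continuous_const.mul (Real.continuous_exp.comp (continuous_const.mul continuous_id))
  have h1 : Integrable (fun t : ℝ => a * Real.exp (a*t)) μx := hcont.integrableOn_Ioc
  have hGint : Integrable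
      (Function.uncurry fun t s : ℝ => if s ≤ t then (a * Real.exp (a*t)) * F s else 0)
      (μx.prod μx) := by
    have hprod : Integrable (fun q : ℝ × ℝ => (a * Real.exp (a*q.1)) * F q.2) (μx.prod μx) :=
      h1.mul_prod hFx
    have hind := hprod.indicator hD
    refine hind.congr (ae_of_all _ fun q => ?_)
    simp [Function.uncurry, Set.indicator_apply]
  have lhs_eq : (∫ t in (0:ℝ)..x, (a * Real.exp (a*t)) * ∫ s in (0:ℝ)..t, F s)
      = ∫ t, (∫ s, (if s ≤ t then (a * Real.exp (a*t)) * F s else 0) ∂μx) ∂μx := by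
    rw [intervalIntegral.integral_of_le hx0]
    refine setIntegral_congr_fun measurableSet_Ioc fun t ht => ?_
    have hset : Set.Iic t ∩ Set.Ioc (0:ℝ) x = Set.Ioc 0 t := by
      ext s
      simp only [Set.mem_inter_iff, Set.mem_Iic, Set.mem_Ioc]
      exact ⟨fun hh => ⟨hh.2.1, hh.1⟩, fun hh => ⟨hh.2, hh.1, hh.2.trans ht.2⟩⟩
    calc (a * Real.exp (a*t)) * ∫ s in (0:ℝ)..t, F s
        = ∫ s in Set.Ioc (0:ℝ) t, (a * Real.exp (a*t)) * F s := by
          rw [intervalIntegral.integral_of_le ht.1.le, ← integral_const_mul]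
      _ = ∫ s, Set.indicator (Set.Iic t) (fun s => (a * Real.exp (a*t)) * F s) s ∂μx := by
          rw [integral_indicator measurableSet_Iic, hμx,
            Measure.restrict_restrict measurableSet_Iic, hset]
      _ = ∫ s, (if s ≤ t then (a * Real.exp (a*t)) * F s else 0) ∂μx := by
          refine integral_congr_ae (ae_of_all _ fun s => ?_)
          simp [Set.indicator_apply]
  have rhs_eq : (∫ s, (∫ t, (if s ≤ t then (a * Real.exp (a*t)) * F s else 0) ∂μx) ∂μx)
      = ∫ s in (0:ℝ)..x, (Real.exp (a*x) - Real.exp (a*s)) * F s := by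
    rw [intervalIntegral.integral_of_le hx0]
    refine setIntegral_congr_fun measurableSet_Ioc fun s hs => ?_
    have hset : Set.Ici s ∩ Set.Ioc (0:ℝ) x = Set.Icc s x := by
      ext t
      simp only [Set.mem_inter_iff, Set.mem_Ici, Set.mem_Ioc, Set.mem_Icc]
      exact ⟨fun hh => ⟨hh.1, hh.2.2⟩, fun hh => ⟨hh.1, hs.1.trans_le hh.1, hh.2⟩⟩
    have hexp : (∫ t in s..x, a * Real.exp (a*t)) = Real.exp (a*x) - Real.exp (a*s) := by
      have hd : ∀ t ∈ Set.uIcc s x, HasDerivAt (fun r => Real.exp (a*r)) (a * Real.exp (a*t)) t := by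
        intro t _
        have := ((hasDerivAt_id t).const_mul a).exp
        simpa [mul_comm] using this
      exact intervalIntegral.integral_eq_sub_of_hasDerivAt hd (hcont.intervalIntegrable s x)
    calc (∫ t, (if s ≤ t then (a * Real.exp (a*t)) * F s else 0) ∂μx)
        = ∫ t, Set.indicator (Set.Ici s) (fun t => (a * Real.exp (a*t)) * F s) t ∂μx := by
          refine integral_congr_ae (ae_of_all _ fun t => ?_)
          simp [Set.indicator_apply]
      _ = ∫ t in Set.Icc s x, (a * Real.exp (a*t)) * F s := by
          rw [integral_indicator measurableSet_Ici, hμx,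
            Measure.restrict_restrict measurableSet_Ici, hset]
      _ = (∫ t in Set.Icc s x, a * Real.exp (a*t)) * F s := by rw [integral_mul_const]
      _ = (Real.exp (a*x) - Real.exp (a*s)) * F s := by
          rw [integral_Icc_eq_integral_Ioc, ← intervalIntegral.integral_of_le hs.2, hexp]
  rw [lhs_eq, MeasureTheory.integral_integral_swap hGint]
  exact rhs_eq

lemma key {φ : ℝ → ℝ} (hφ : IntervalIntegrable φ volume 0 1) (a c : ℝ) {x : ℝ}
    (hx : x ∈ Set.Icc (0:ℝ) 1) :
    Real.exp (a*x) * (c + ∫ t in (0:ℝ)..x, Real.exp (-(a*t)) * φ t)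
      = c + ∫ t in (0:ℝ)..x,
          (φ t + a * (Real.exp (a*t) * (c + ∫ s in (0:ℝ)..t, Real.exp (-(a*s)) * φ s))) := by
  have hu01 : Set.uIcc (0:ℝ) 1 = Set.Icc 0 1 := Set.uIcc_of_le zero_le_one
  have hsub : Set.uIcc (0:ℝ) x ⊆ Set.uIcc (0:ℝ) 1 := by
    rw [hu01, Set.uIcc_of_le hx.1]; exact Set.Icc_subset_Icc le_rfl hx.2
  have hFcont : ContinuousOn (fun t : ℝ => Real.exp (-(a*t))) (Set.uIcc (0:ℝ) 1) :=
    (Real.continuous_exp.comp (continuous_const.mul continuous_id).neg).continuousOn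
  have hF : IntervalIntegrable (fun t => Real.exp (-(a*t)) * φ t) volume 0 1 :=
    hφ.continuousOn_mul hFcont
  set F := fun t => Real.exp (-(a*t)) * φ t with hFdef
  set Φ := fun t => ∫ s in (0:ℝ)..t, F s with hΦdef
  have hΦcont : ContinuousOn Φ (Set.Icc (0:ℝ) 1) := by
    rw [← hu01, hΦdef]
    exact intervalIntegral.continuousOn_primitive_interval' hF Set.left_mem_uIcc
  have hcont2 : Continuous fun t : ℝ => a * Real.exp (a*t) :=
    continuous_const.mul (Real.continuous_exp.comp (continuous_const.mul continuous_id))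
  have hψcont : ContinuousOn (fun t => Real.exp (a*t) * (c + Φ t)) (Set.Icc (0:ℝ) 1) :=
    ((Real.continuous_exp.comp (continuous_const.mul continuous_id)).continuousOn).mul
      (continuousOn_const.add hΦcont)
  have hφx : IntervalIntegrable φ volume 0 x := hφ.mono_set hsub
  have hψx : IntervalIntegrable (fun t => Real.exp (a*t) * (c + Φ t)) volume 0 x := by
    refine ContinuousOn.intervalIntegrable (hψcont.mono ?_)
    rw [Set.uIcc_of_le hx.1]; exact Set.Icc_subset_Icc le_rfl hx.2
  have hΦx : ContinuousOn Φ (Set.uIcc (0:ℝ) x) := by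
    refine hΦcont.mono ?_
    rw [Set.uIcc_of_le hx.1]; exact Set.Icc_subset_Icc le_rfl hx.2
  have hAint : IntervalIntegrable (fun t => (a * Real.exp (a*t)) * Φ t) volume 0 x :=
    ContinuousOn.intervalIntegrable (hcont2.continuousOn.mul hΦx)
  have hsplit : (∫ t in (0:ℝ)..x, (φ t + a * (Real.exp (a*t) * (c + Φ t))))
      = (∫ t in (0:ℝ)..x, φ t) + ∫ t in (0:ℝ)..x, a * (Real.exp (a*t) * (c + Φ t)) :=
    intervalIntegral.integral_add hφx (hψx.const_mul a)
  have hsplit2 : (∫ t in (0:ℝ)..x, a * (Real.exp (a*t) * (c + Φ t)))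
      = (∫ t in (0:ℝ)..x, (a * Real.exp (a*t)) * c)
        + ∫ t in (0:ℝ)..x, (a * Real.exp (a*t)) * Φ t := by
    rw [← intervalIntegral.integral_add ((hcont2.intervalIntegrable 0 x).mul_const c) hAint]
    exact intervalIntegral.integral_congr fun t _ => by ring
  have hexp : (∫ t in (0:ℝ)..x, a * Real.exp (a*t)) = Real.exp (a*x) - Real.exp (a*0) := by
    have hd : ∀ t ∈ Set.uIcc (0:ℝ) x, HasDerivAt (fun r => Real.exp (a*r)) (a * Real.exp (a*t)) t := by
      intro t _
      have := ((hasDerivAt_id t).const_mul a).exp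
      simpa [mul_comm] using this
    exact intervalIntegral.integral_eq_sub_of_hasDerivAt hd (hcont2.intervalIntegrable 0 x)
  have hconst : (∫ t in (0:ℝ)..x, (a * Real.exp (a*t)) * c)
      = (Real.exp (a*x) - Real.exp (a*0)) * c := by
    rw [intervalIntegral.integral_mul_const, hexp]
  have htri : (∫ t in (0:ℝ)..x, (a * Real.exp (a*t)) * Φ t)
      = ∫ s in (0:ℝ)..x, (Real.exp (a*x) - Real.exp (a*s)) * F s :=
    triangle ((intervalIntegrable_iff_integrableOn_Ioc_of_le zero_le_one).mp hF) a ⟨hx.1, hx.2⟩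
  have hsplit3 : (∫ s in (0:ℝ)..x, (Real.exp (a*x) - Real.exp (a*s)) * F s)
      = Real.exp (a*x) * Φ x - ∫ s in (0:ℝ)..x, φ s := by
    have h1 : ∀ s, (Real.exp (a*x) - Real.exp (a*s)) * F s = Real.exp (a*x) * F s - φ s := by
      intro s
      have hone : Real.exp (a*s) * Real.exp (-(a*s)) = 1 := by
        rw [← Real.exp_add]; simp
      calc (Real.exp (a*x) - Real.exp (a*s)) * F s
          = Real.exp (a*x) * F s - (Real.exp (a*s) * Real.exp (-(a*s))) * φ s := by
            simp only [hFdef]; ring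
        _ = Real.exp (a*x) * F s - φ s := by rw [hone]; ring
    rw [intervalIntegral.integral_congr fun s _ => h1 s,
      intervalIntegral.integral_sub ((hF.mono_set hsub).const_mul _) hφx,
      intervalIntegral.integral_const_mul]
  rw [hsplit, hsplit2, hconst, htri, hsplit3]
  simp only [mul_zero, Real.exp_zero]
  ring

lemma ode {W : ℝ → ℝ} {b : ℝ} (hWc : ContinuousOn W (Set.Icc (0:ℝ) 1))
    (heq : ∀ x ∈ Set.Icc (0:ℝ) 1, W x = W 0 + b * ∫ t in (0:ℝ)..x, W t) :
    ∀ x ∈ Set.Icc (0:ℝ) 1, W x = W 0 * Real.exp (b*x) := by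
  have hu01 : Set.uIcc (0:ℝ) 1 = Set.Icc 0 1 := Set.uIcc_of_le zero_le_one
  have hWint : IntervalIntegrable W volume 0 1 := by
    refine ContinuousOn.intervalIntegrable ?_
    rw [hu01]; exact hWc
  have hprimcont : ContinuousOn (fun y => ∫ t in (0:ℝ)..y, W t) (Set.Icc (0:ℝ) 1) := by
    rw [← hu01]
    exact intervalIntegral.continuousOn_primitive_interval' hWint Set.left_mem_uIcc
  set V := fun y : ℝ => Real.exp (-(b*y)) * (W 0 + b * ∫ t in (0:ℝ)..y, W t) with hVdef
  have hVcont : ContinuousOn V (Set.Icc (0:ℝ) 1) := by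
    rw [hVdef]
    exact ((Real.continuous_exp.comp (continuous_const.mul continuous_id).neg).continuousOn).mul
      (continuousOn_const.add (continuousOn_const.mul hprimcont))
  have hder : ∀ x ∈ Set.Ico (0:ℝ) 1, HasDerivWithinAt V 0 (Set.Ici x) x := by
    intro x hx
    have hxIcc : x ∈ Set.Icc (0:ℝ) 1 := ⟨hx.1, hx.2.le⟩
    have hmem : Set.Icc (0:ℝ) 1 ∈ nhdsWithin x (Set.Ioi x) := by
      refine mem_nhdsWithin.mpr ⟨Set.Iio 1, isOpen_Iio, hx.2, ?_⟩
      rintro t ⟨ht1, ht2⟩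
      exact ⟨(hx.1.trans_lt ht2).le, ht1.le⟩
    have hmeas : StronglyMeasurableAtFilter W (nhdsWithin x (Set.Ioi x)) volume :=
      ⟨Set.Icc 0 1, hmem, hWc.aestronglyMeasurable measurableSet_Icc⟩
    have hcw : ContinuousWithinAt W (Set.Ioi x) x :=
      (hWc x hxIcc).mono_of_mem_nhdsWithin hmem
    have hWix : IntervalIntegrable W volume 0 x := by
      refine hWint.mono_set ?_
      rw [hu01, Set.uIcc_of_le hx.1]; exact Set.Icc_subset_Icc le_rfl hx.2.le
    have hprim : HasDerivWithinAt (fun y => ∫ t in (0:ℝ)..y, W t) (W x) (Set.Ici x) x :=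
      intervalIntegral.integral_hasDerivWithinAt_right (s := Set.Ici x) (t := Set.Ioi x)
        hWix hmeas hcw
    have h1 : HasDerivWithinAt (fun y => W 0 + b * ∫ t in (0:ℝ)..y, W t) (b * W x)
        (Set.Ici x) x := (hprim.const_mul b).const_add (W 0)
    have h2 : HasDerivWithinAt (fun y : ℝ => Real.exp (-(b*y))) (-b * Real.exp (-(b*x)))
        (Set.Ici x) x := by
      have hb : HasDerivAt (fun y : ℝ => -(b*y)) (-b) x := by
        exact (((hasDerivAt_id x).const_mul b).neg).congr_deriv (by ring)
      have := hb.exp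
      exact (by simpa [mul_comm] using this : HasDerivAt (fun y : ℝ => Real.exp (-(b*y)))
        (-b * Real.exp (-(b*x))) x).hasDerivWithinAt
    have hmul := h2.mul h1
    have hzero : (-b * Real.exp (-(b*x))) * (W 0 + b * ∫ t in (0:ℝ)..x, W t)
        + Real.exp (-(b*x)) * (b * W x) = 0 := by
      rw [← heq x hxIcc]; ring
    rw [hVdef]
    rw [hzero] at hmul
    exact hmul
  have hconst := constant_of_has_deriv_right_zero hVcont hder
  intro x hx
  have hV0 : V 0 = W 0 := by simp [hVdef]
  have hVx := hconst x hx
  rw [hV0] at hVx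
  have hkey : Real.exp (-(b*x)) * W x = W 0 := by
    rw [heq x hx]; exact hVx
  have hE : Real.exp (-(b*x)) * Real.exp (b*x) = 1 := by rw [← Real.exp_add]; simp
  calc W x = (Real.exp (-(b*x)) * Real.exp (b*x)) * W x := by rw [hE]; ring
    _ = (Real.exp (-(b*x)) * W x) * Real.exp (b*x) := by ring
    _ = W 0 * Real.exp (b*x) := by rw [hkey]

lemma uniq {f g p u dp du p' u' dp' du' : ℝ → ℝ}
    (h1 : IsResolventSol f g p u dp du) (h2 : IsResolventSol f g p' u' dp' du') :
    ∀ x ∈ Set.Icc (0:ℝ) 1, p x = p' x ∧ u x = u' x := by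
  obtain ⟨hdp2, hdu2, hdpI, hduI, hpF, huF, hae1, hae2, hu0, hu1⟩ := h1
  obtain ⟨hdp2', hdu2', hdpI', hduI', hpF', huF', hae1', hae2', hu0', hu1'⟩ := h2
  have hu01 : Set.uIcc (0:ℝ) 1 = Set.Icc 0 1 := Set.uIcc_of_le zero_le_one
  have hsub : ∀ {x : ℝ}, x ∈ Set.Icc (0:ℝ) 1 → Set.uIcc (0:ℝ) x ⊆ Set.uIcc (0:ℝ) 1 := by
    intro x hx
    rw [hu01, Set.uIcc_of_le hx.1]; exact Set.Icc_subset_Icc le_rfl hx.2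
  set D1 := fun t => (dp t + du t) - (dp' t + du' t) with hD1
  set D2 := fun t => (dp t - du t) - (dp' t - du' t) with hD2
  set W := fun t => (p t + u t) - (p' t + u' t) with hW
  set Z := fun t => (p t - u t) - (p' t - u' t) with hZ
  have hD1I : IntervalIntegrable D1 volume 0 1 := (hdpI.add hduI).sub (hdpI'.add hduI')
  have hD2I : IntervalIntegrable D2 volume 0 1 := (hdpI.sub hduI).sub (hdpI'.sub hduI')
  have hWft : ∀ x ∈ Set.Icc (0:ℝ) 1, W x = W 0 + ∫ t in (0:ℝ)..x, D1 t := by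
    intro x hx
    have hadd : (∫ t in (0:ℝ)..x, D1 t)
        = ((∫ t in (0:ℝ)..x, dp t) + (∫ t in (0:ℝ)..x, du t))
          - ((∫ t in (0:ℝ)..x, dp' t) + (∫ t in (0:ℝ)..x, du' t)) := by
      rw [← intervalIntegral.integral_add (hdpI.mono_set (hsub hx)) (hduI.mono_set (hsub hx)),
        ← intervalIntegral.integral_add (hdpI'.mono_set (hsub hx)) (hduI'.mono_set (hsub hx)),
        ← intervalIntegral.integral_sub
          ((hdpI.mono_set (hsub hx)).add (hduI.mono_set (hsub hx)))
          ((hdpI'.mono_set (hsub hx)).add (hduI'.mono_set (hsub hx)))]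
    simp only [hW]
    rw [hpF x hx, huF x hx, hpF' x hx, huF' x hx, hadd]
    ring
  have hZft : ∀ x ∈ Set.Icc (0:ℝ) 1, Z x = Z 0 + ∫ t in (0:ℝ)..x, D2 t := by
    intro x hx
    have hadd : (∫ t in (0:ℝ)..x, D2 t)
        = ((∫ t in (0:ℝ)..x, dp t) - (∫ t in (0:ℝ)..x, du t))
          - ((∫ t in (0:ℝ)..x, dp' t) - (∫ t in (0:ℝ)..x, du' t)) := by
      rw [← intervalIntegral.integral_sub (hdpI.mono_set (hsub hx)) (hduI.mono_set (hsub hx)),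
        ← intervalIntegral.integral_sub (hdpI'.mono_set (hsub hx)) (hduI'.mono_set (hsub hx)),
        ← intervalIntegral.integral_sub
          ((hdpI.mono_set (hsub hx)).sub (hduI.mono_set (hsub hx)))
          ((hdpI'.mono_set (hsub hx)).sub (hduI'.mono_set (hsub hx)))]
    simp only [hZ]
    rw [hpF x hx, huF x hx, hpF' x hx, huF' x hx, hadd]
    ring
  have haeW : ∀ᵐ t ∂(volume.restrict (Set.Ioc (0:ℝ) 1)), D1 t = -W t := by
    rw [← Measure.restrict_congr_set Ioo_ae_eq_Ioc]
    filter_upwards [hae1, hae2, hae1', hae2'] with t e1 e2 e3 e4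
    simp only [hD1, hW]
    linarith
  have haeZ : ∀ᵐ t ∂(volume.restrict (Set.Ioc (0:ℝ) 1)), D2 t = Z t := by
    rw [← Measure.restrict_congr_set Ioo_ae_eq_Ioc]
    filter_upwards [hae1, hae2, hae1', hae2'] with t e1 e2 e3 e4
    simp only [hD2, hZ]
    linarith
  have hWcont : ContinuousOn W (Set.Icc (0:ℝ) 1) := by
    have hc : ContinuousOn (fun x => W 0 + ∫ t in (0:ℝ)..x, D1 t) (Set.Icc (0:ℝ) 1) := by
      refine continuousOn_const.add ?_
      rw [← hu01]
      exact intervalIntegral.continuousOn_primitive_interval' hD1I Set.left_mem_uIcc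
    exact hc.congr fun x hx => hWft x hx
  have hZcont : ContinuousOn Z (Set.Icc (0:ℝ) 1) := by
    have hc : ContinuousOn (fun x => Z 0 + ∫ t in (0:ℝ)..x, D2 t) (Set.Icc (0:ℝ) 1) := by
      refine continuousOn_const.add ?_
      rw [← hu01]
      exact intervalIntegral.continuousOn_primitive_interval' hD2I Set.left_mem_uIcc
    exact hc.congr fun x hx => hZft x hx
  have hWeq : ∀ x ∈ Set.Icc (0:ℝ) 1, W x = W 0 + (-1:ℝ) * ∫ t in (0:ℝ)..x, W t := by
    intro x hx
    have hcong : (∫ t in (0:ℝ)..x, D1 t) = ∫ t in (0:ℝ)..x, -W t := by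
      rw [intervalIntegral.integral_of_le hx.1, intervalIntegral.integral_of_le hx.1]
      exact integral_congr_ae
        (ae_restrict_of_ae_restrict_of_subset (Set.Ioc_subset_Ioc_right hx.2) haeW)
    rw [hWft x hx, hcong, intervalIntegral.integral_neg]
    ring
  have hZeq : ∀ x ∈ Set.Icc (0:ℝ) 1, Z x = Z 0 + (1:ℝ) * ∫ t in (0:ℝ)..x, Z t := by
    intro x hx
    have hcong : (∫ t in (0:ℝ)..x, D2 t) = ∫ t in (0:ℝ)..x, Z t := by
      rw [intervalIntegral.integral_of_le hx.1, intervalIntegral.integral_of_le hx.1]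
      exact integral_congr_ae
        (ae_restrict_of_ae_restrict_of_subset (Set.Ioc_subset_Ioc_right hx.2) haeZ)
    rw [hZft x hx, hcong]
    ring
  have hWsol := ode hWcont hWeq
  have hZsol := ode hZcont hZeq
  have hW0 : W 0 = p 0 - p' 0 := by simp only [hW]; rw [hu0, hu0']; ring
  have hZ0 : Z 0 = p 0 - p' 0 := by simp only [hZ]; rw [hu0, hu0']; ring
  have hW1 := hWsol 1 (Set.right_mem_Icc.mpr zero_le_one)
  have hZ1 := hZsol 1 (Set.right_mem_Icc.mpr zero_le_one)
  have hWZ1 : W 1 = Z 1 := by simp only [hW, hZ]; rw [hu1, hu1']; ring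
  have hp0 : p 0 - p' 0 = 0 := by
    have heq1 : (p 0 - p' 0) * Real.exp ((-1:ℝ)*1) = (p 0 - p' 0) * Real.exp ((1:ℝ)*1) := by
      calc (p 0 - p' 0) * Real.exp ((-1:ℝ)*1) = W 1 := by rw [← hW0, ← hW1]
        _ = Z 1 := hWZ1
        _ = (p 0 - p' 0) * Real.exp ((1:ℝ)*1) := by rw [hZ1, hZ0]
    have h2 : (p 0 - p' 0) * (Real.exp ((-1:ℝ)*1) - Real.exp ((1:ℝ)*1)) = 0 := by
      have := heq1
      ring_nf at this ⊢
      linarith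
    have h3 : Real.exp ((-1:ℝ)*1) - Real.exp ((1:ℝ)*1) ≠ 0 := by
      have := Real.exp_lt_exp.mpr (show ((-1:ℝ)*1) < ((1:ℝ)*1) by norm_num)
      linarith
    exact (mul_eq_zero.mp h2).resolve_right h3
  intro x hx
  have hWx := hWsol x hx
  have hZx := hZsol x hx
  rw [hW0, hp0, zero_mul] at hWx
  rw [hZ0, hp0, zero_mul] at hZx
  simp only [hW] at hWx
  simp only [hZ] at hZx
  exact ⟨by linarith, by linarith⟩

end ResolventAux

/-- for any `f, g ∈ L²(0,1)` the boundary value problem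
`p + u' = f`, `u + p' = g`, `u(0)=u(1)=0` has a solution
`(p,u) ∈ H¹(0,1) × H¹₀(0,1)`, which is unique (as continuous representatives
on `[0,1]`). -/
theorem stmt1 (f g : ℝ → ℝ)
    (hf : MemLp f 2 (volume.restrict (Set.Ioo (0:ℝ) 1)))
    (hg : MemLp g 2 (volume.restrict (Set.Ioo (0:ℝ) 1))) :
    ∃ p u dp du : ℝ → ℝ, IsResolventSol f g p u dp du ∧
      ∀ p' u' dp' du' : ℝ → ℝ, IsResolventSol f g p' u' dp' du' →
        ∀ x ∈ Set.Icc (0:ℝ) 1, p x = p' x ∧ u x = u' x := by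
  classical
  have fInt : IntervalIntegrable f volume 0 1 := ResolventAux.l2_ii hf
  have gInt : IntervalIntegrable g volume 0 1 := ResolventAux.l2_ii hg
  have hu01 : Set.uIcc (0:ℝ) 1 = Set.Icc 0 1 := Set.uIcc_of_le zero_le_one
  have hsub : ∀ {x : ℝ}, x ∈ Set.Icc (0:ℝ) 1 → Set.uIcc (0:ℝ) x ⊆ Set.uIcc (0:ℝ) 1 := by
    intro x hx
    rw [hu01, Set.uIcc_of_le hx.1]; exact Set.Icc_subset_Icc le_rfl hx.2
  set h := fun t => f t + g t with hhdef
  set k := fun t => g t - f t with hkdef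
  have hInt : IntervalIntegrable h volume 0 1 := fInt.add gInt
  have kInt : IntervalIntegrable k volume 0 1 := gInt.sub fInt
  have hE1cont : Continuous fun t : ℝ => Real.exp (-((-1:ℝ)*t)) :=
    Real.continuous_exp.comp (continuous_const.mul continuous_id).neg
  have hE2cont : Continuous fun t : ℝ => Real.exp (-((1:ℝ)*t)) :=
    Real.continuous_exp.comp (continuous_const.mul continuous_id).neg
  have hF1 : IntervalIntegrable (fun t => Real.exp (-((-1:ℝ)*t)) * h t) volume 0 1 :=
    hInt.continuousOn_mul hE1cont.continuousOn
  have hF2 : IntervalIntegrable (fun t => Real.exp (-((1:ℝ)*t)) * k t) volume 0 1 :=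
    kInt.continuousOn_mul hE2cont.continuousOn
  set A1 := ∫ t in (0:ℝ)..1, Real.exp (-((-1:ℝ)*t)) * h t with hA1
  set B1 := ∫ t in (0:ℝ)..1, Real.exp (-((1:ℝ)*t)) * k t with hB1
  set E := Real.exp ((1:ℝ)*1) with hEdef
  set E' := Real.exp ((-1:ℝ)*1) with hE'def
  have hEne : E - E' ≠ 0 := by
    have := Real.exp_lt_exp.mpr (show ((-1:ℝ)*1) < ((1:ℝ)*1) by norm_num)
    rw [hEdef, hE'def]
    linarith
  set c := (E' * A1 - E * B1) / (E - E') with hcdef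
  set w := fun y => Real.exp ((-1:ℝ)*y) * (c + ∫ t in (0:ℝ)..y, Real.exp (-((-1:ℝ)*t)) * h t)
    with hwdef
  set z := fun y => Real.exp ((1:ℝ)*y) * (c + ∫ t in (0:ℝ)..y, Real.exp (-((1:ℝ)*t)) * k t)
    with hzdef
  set p := fun y => (w y + z y)/2 with hpdef
  set u := fun y => (w y - z y)/2 with hudef
  set dp := fun y => g y - u y with hdpdef
  set du := fun y => f y - p y with hdudef
  have wkey : ∀ x ∈ Set.Icc (0:ℝ) 1, w x = c + ∫ t in (0:ℝ)..x, (h t + (-1:ℝ) * w t) := by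
    intro x hx
    exact ResolventAux.key hInt (-1 : ℝ) c hx
  have zkey : ∀ x ∈ Set.Icc (0:ℝ) 1, z x = c + ∫ t in (0:ℝ)..x, (k t + (1:ℝ) * z t) := by
    intro x hx
    exact ResolventAux.key kInt (1 : ℝ) c hx
  have hΦ1cont : ContinuousOn (fun y => ∫ t in (0:ℝ)..y, Real.exp (-((-1:ℝ)*t)) * h t)
      (Set.Icc (0:ℝ) 1) := by
    rw [← hu01]
    exact intervalIntegral.continuousOn_primitive_interval' hF1 Set.left_mem_uIcc
  have hΦ2cont : ContinuousOn (fun y => ∫ t in (0:ℝ)..y, Real.exp (-((1:ℝ)*t)) * k t)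
      (Set.Icc (0:ℝ) 1) := by
    rw [← hu01]
    exact intervalIntegral.continuousOn_primitive_interval' hF2 Set.left_mem_uIcc
  have hwcont : ContinuousOn w (Set.Icc (0:ℝ) 1) := by
    rw [hwdef]
    exact ((Real.continuous_exp.comp (continuous_const.mul continuous_id)).continuousOn).mul
      (continuousOn_const.add hΦ1cont)
  have hzcont : ContinuousOn z (Set.Icc (0:ℝ) 1) := by
    rw [hzdef]
    exact ((Real.continuous_exp.comp (continuous_const.mul continuous_id)).continuousOn).mul
      (continuousOn_const.add hΦ2cont)
  have hpcont : ContinuousOn p (Set.Icc (0:ℝ) 1) := by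
    rw [hpdef]
    exact (hwcont.add hzcont).div_const 2
  have hucont : ContinuousOn u (Set.Icc (0:ℝ) 1) := by
    rw [hudef]
    exact (hwcont.sub hzcont).div_const 2
  have hwint : IntervalIntegrable w volume 0 1 := by
    refine ContinuousOn.intervalIntegrable ?_
    rw [hu01]; exact hwcont
  have hzint : IntervalIntegrable z volume 0 1 := by
    refine ContinuousOn.intervalIntegrable ?_
    rw [hu01]; exact hzcont
  have hpint : IntervalIntegrable p volume 0 1 := by
    refine ContinuousOn.intervalIntegrable ?_
    rw [hu01]; exact hpcont
  have huint : IntervalIntegrable u volume 0 1 := by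
    refine ContinuousOn.intervalIntegrable ?_
    rw [hu01]; exact hucont
  have hw0 : w 0 = c := by simp [hwdef]
  have hz0 : z 0 = c := by simp [hzdef]
  have hp0 : p 0 = c := by simp only [hpdef]; rw [hw0, hz0]; ring
  have hu0 : u 0 = 0 := by simp only [hudef]; rw [hw0, hz0]; ring
  have hu1 : u 1 = 0 := by
    have hw1 : w 1 = E' * (c + A1) := by
      simp only [hwdef]
      rfl
    have hz1 : z 1 = E * (c + B1) := by
      simp only [hzdef]
      rfl
    simp only [hudef]
    rw [hw1, hz1, hcdef]
    field_simp
    ring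
  have ftc_p : ∀ x ∈ Set.Icc (0:ℝ) 1, p x = p 0 + ∫ t in (0:ℝ)..x, dp t := by
    intro x hx
    have i1 : IntervalIntegrable (fun t => h t + (-1:ℝ) * w t) volume 0 x :=
      (hInt.mono_set (hsub hx)).add ((hwint.mono_set (hsub hx)).const_mul _)
    have i2 : IntervalIntegrable (fun t => k t + (1:ℝ) * z t) volume 0 x :=
      (kInt.mono_set (hsub hx)).add ((hzint.mono_set (hsub hx)).const_mul _)
    have hadd : (∫ t in (0:ℝ)..x, (h t + (-1:ℝ) * w t)) + (∫ t in (0:ℝ)..x, (k t + (1:ℝ) * z t))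
        = ∫ t in (0:ℝ)..x, (2:ℝ) * dp t := by
      rw [← intervalIntegral.integral_add i1 i2]
      refine intervalIntegral.integral_congr fun t _ => ?_
      simp only [hdpdef, hudef, hhdef, hkdef]
      ring
    have h2 : (∫ t in (0:ℝ)..x, (2:ℝ) * dp t) = 2 * ∫ t in (0:ℝ)..x, dp t :=
      intervalIntegral.integral_const_mul _ _
    rw [h2] at hadd
    simp only [hpdef]
    rw [wkey x hx, zkey x hx, hw0, hz0]
    linarith [hadd]
  have ftc_u : ∀ x ∈ Set.Icc (0:ℝ) 1, u x = u 0 + ∫ t in (0:ℝ)..x, du t := by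
    intro x hx
    have i1 : IntervalIntegrable (fun t => h t + (-1:ℝ) * w t) volume 0 x :=
      (hInt.mono_set (hsub hx)).add ((hwint.mono_set (hsub hx)).const_mul _)
    have i2 : IntervalIntegrable (fun t => k t + (1:ℝ) * z t) volume 0 x :=
      (kInt.mono_set (hsub hx)).add ((hzint.mono_set (hsub hx)).const_mul _)
    have hadd : (∫ t in (0:ℝ)..x, (h t + (-1:ℝ) * w t)) - (∫ t in (0:ℝ)..x, (k t + (1:ℝ) * z t))
        = ∫ t in (0:ℝ)..x, (2:ℝ) * du t := by
      rw [← intervalIntegral.integral_sub i1 i2]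
      refine intervalIntegral.integral_congr fun t _ => ?_
      simp only [hdudef, hpdef, hhdef, hkdef]
      ring
    have h2 : (∫ t in (0:ℝ)..x, (2:ℝ) * du t) = 2 * ∫ t in (0:ℝ)..x, du t :=
      intervalIntegral.integral_const_mul _ _
    rw [h2] at hadd
    simp only [hudef]
    rw [wkey x hx, zkey x hx, hw0, hz0]
    linarith [hadd]
  have hsol : IsResolventSol f g p u dp du := by
    refine ⟨?_, ?_, ?_, ?_, ftc_p, ftc_u, ?_, ?_, hu0, hu1⟩
    · rw [hdpdef]
      exact hg.sub (ResolventAux.mem_of_contOn hucont)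
    · rw [hdudef]
      exact hf.sub (ResolventAux.mem_of_contOn hpcont)
    · rw [hdpdef]
      exact gInt.sub huint
    · rw [hdudef]
      exact fInt.sub hpint
    · refine ae_of_all _ fun x => ?_
      simp only [hdudef]; ring
    · refine ae_of_all _ fun x => ?_
      simp only [hdpdef]; ring
  exact ⟨p, u, dp, du, hsol, fun p' u' dp' du' hsol' => ResolventAux.uniq hsol hsol'⟩
end

section
/- Let H, K be Hilbert spaces, F : D(F) ⊂ H → K with derivative F' Lipschitz continuous with constant L on the convex set D(F). Suppose a† ∈ D(F) satisfies the approximate source condition a† − a* = F'(a†)* w + e with w ∈ K, e ∈ H and L‖w‖ < 1. Let a ∈ D(F) be any minimizer of J(a) = ‖F(a) − h^δ‖² + α‖a − a*‖² with ‖h^δ − F(a†)‖ ≤ δ. Then there is a constant C depending only on L‖w‖ such that ‖a − a†‖² ≤ C(δ²/α + α‖w‖² + δ‖w‖ + ‖e‖²). -/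
open Set

lemma taylor_aux {H K : Type} [NormedAddCommGroup H] [NormedSpace ℝ H]
    [NormedAddCommGroup K] [NormedSpace ℝ K]
    {D : Set H} {F : H → K} {F' : H → H →L[ℝ] K} {L : ℝ}
    (hD : Convex ℝ D)
    (hF : ∀ b ∈ D, HasFDerivAt F (F' b) b)
    (hLip : ∀ b ∈ D, ∀ c ∈ D, ‖F' b - F' c‖ ≤ L * ‖b - c‖)
    {x y : H} (hx : x ∈ D) (hy : y ∈ D) :
    ‖F y - F x - F' x (y - x)‖ ≤ L / 2 * ‖y - x‖ ^ 2 := by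
  set v := y - x with hv
  have hmem : ∀ t ∈ Icc (0:ℝ) 1, x + t • v ∈ D := by
    intro t ht
    have h := hD hx hy (by linarith [ht.2] : (0:ℝ) ≤ 1 - t) ht.1 (by ring)
    have : (1 - t) • x + t • y = x + t • v := by
      rw [hv]; module
    rwa [this] at h
  set g : ℝ → K := fun t => F (x + t • v) - t • (F' x v) - F x with hg
  set g' : ℝ → K := fun t => F' (x + t • v) v - F' x v with hg'
  have hder : ∀ t ∈ Icc (0:ℝ) 1, HasDerivAt g (g' t) t := by
    intro t ht
    have hγ : HasDerivAt (fun s : ℝ => x + s • v) v t := by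
      simpa using ((hasDerivAt_id t).smul_const v).const_add x
    have h1 : HasDerivAt (fun s : ℝ => F (x + s • v)) (F' (x + t • v) v) t :=
      (hF _ (hmem t ht)).comp_hasDerivAt t hγ
    have h2 : HasDerivAt (fun s : ℝ => s • (F' x v)) (F' x v) t := by
      simpa using (hasDerivAt_id t).smul_const (F' x v)
    simpa [hg, hg'] using (h1.sub h2).sub_const (F x)
  have key := image_norm_le_of_norm_deriv_right_le_deriv_boundary
    (f := g) (f' := g') (a := 0) (b := 1)
    (B := fun t => L * ‖v‖ ^ 2 / 2 * t ^ 2) (B' := fun t => L * ‖v‖ ^ 2 * t)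
    (fun t ht => (hder t ht).continuousAt.continuousWithinAt)
    (fun t ht => (hder t (Ico_subset_Icc_self ht)).hasDerivWithinAt)
    (by simp [hg])
    (by
      intro t
      have := (hasDerivAt_pow 2 t).const_mul (L * ‖v‖ ^ 2 / 2)
      refine this.congr_deriv ?_
      ring)
    (by
      intro t ht
      have hmem' : x + t • v ∈ D := hmem t (Ico_subset_Icc_self ht)
      have h1 : ‖g' t‖ ≤ ‖F' (x + t • v) - F' x‖ * ‖v‖ := by
        have : g' t = (F' (x + t • v) - F' x) v := by simp [hg']
        rw [this]
        exact (F' (x + t • v) - F' x).le_opNorm v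
      have h2 : ‖F' (x + t • v) - F' x‖ ≤ L * ‖x + t • v - x‖ := hLip _ hmem' _ hx
      have h3 : ‖x + t • v - x‖ = t * ‖v‖ := by
        simp [norm_smul, abs_of_nonneg ht.1]
      calc ‖g' t‖ ≤ (L * ‖x + t • v - x‖) * ‖v‖ :=
            h1.trans (mul_le_mul_of_nonneg_right h2 (norm_nonneg _))
        _ = L * ‖v‖ ^ 2 * t := by rw [h3]; ring)
  have h1 : (1:ℝ) ∈ Icc (0:ℝ) 1 := by norm_num
  have := key h1
  have hg1 : g 1 = F y - F x - F' x (y - x) := by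
    simp [hg, hv]; abel
  rw [hg1] at this
  calc ‖F y - F x - F' x (y - x)‖ ≤ L * ‖v‖ ^ 2 / 2 * 1 ^ 2 := this
    _ = L / 2 * ‖y - x‖ ^ 2 := by rw [hv]; ring

set_option maxHeartbeats 1600000 in
/-- convergence rates for Tikhonov regularization under an
approximate source condition `a† − a* = F'(a†)* w + e` with `L‖w‖ < 1`:
any minimizer `a` of the Tikhonov functional with noise level `δ` satisfies
`‖a − a†‖² ≤ C (δ²/α + α‖w‖² + δ‖w‖ + ‖e‖²)`, where `C` depends only on
(a bound `ρ < 1` for) the size of `L‖w‖`. -/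
theorem stmt7 (ρ : ℝ) (hρ : ρ < 1) :
    ∃ C : ℝ, 0 < C ∧
      ∀ (H K : Type)
        [NormedAddCommGroup H] [InnerProductSpace ℝ H] [CompleteSpace H]
        [NormedAddCommGroup K] [InnerProductSpace ℝ K] [CompleteSpace K]
        (D : Set H) (F : H → K) (F' : H → H →L[ℝ] K)
        (L α δ : ℝ) (adag astar a : H) (hδdata : K) (w : K) (e : H),
        Convex ℝ D →
        (0 ≤ L) →
        (∀ b ∈ D, HasFDerivAt F (F' b) b) →
        (∀ b ∈ D, ∀ c ∈ D, ‖F' b - F' c‖ ≤ L * ‖b - c‖) →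
        adag ∈ D → a ∈ D →
        adag - astar = (F' adag).adjoint w + e →
        L * ‖w‖ ≤ ρ →
        0 < α → 0 ≤ δ →
        ‖hδdata - F adag‖ ≤ δ →
        (∀ b ∈ D, ‖F a - hδdata‖ ^ 2 + α * ‖a - astar‖ ^ 2
            ≤ ‖F b - hδdata‖ ^ 2 + α * ‖b - astar‖ ^ 2) →
        ‖a - adag‖ ^ 2 ≤ C * (δ ^ 2 / α + α * ‖w‖ ^ 2 + δ * ‖w‖ + ‖e‖ ^ 2) := by
  have hσ : 0 < 1 - ρ := by linarith
  set σ := 1 - ρ with hσdef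
  refine ⟨(4 * σ + 4) / σ ^ 2, by positivity, ?_⟩
  intro H K _ _ _ _ _ _ D F F' L α δ adag astar a hδdata w e hD hL hF hLip hadag ha
    hsource hLw hα hδ hnoise hmin
  set t := ‖a - adag‖ with ht
  set s := ‖F a - hδdata‖ with hs
  set W := ‖w‖ with hW
  set E := ‖e‖ with hE
  have hρ0 : 0 ≤ ρ := le_trans (mul_nonneg hL (norm_nonneg w)) hLw
  have hσ1 : σ ≤ 1 := by rw [hσdef]; linarith
  -- minimality at adag
  have h1 := hmin adag hadag
  have hδsq : ‖F adag - hδdata‖ ^ 2 ≤ δ ^ 2 := by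
    have h2 : ‖F adag - hδdata‖ ≤ δ := by rw [norm_sub_rev]; exact hnoise
    nlinarith [norm_nonneg (F adag - hδdata)]
  -- expansion of ‖a - astar‖²
  have hexp : ‖a - astar‖ ^ 2
      = t ^ 2 + 2 * inner ℝ (a - adag) (adag - astar) + ‖adag - astar‖ ^ 2 := by
    have h : a - astar = (a - adag) + (adag - astar) := by abel
    rw [h, norm_add_sq_real, ht]
  rw [hexp] at h1
  set ip : ℝ := inner ℝ (a - adag) (adag - astar) with hip
  have hq : s ^ 2 + α * t ^ 2 + 2 * α * ip ≤ δ ^ 2 := by nlinarith [h1, hδsq]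
  -- Taylor estimate
  have hT : ‖F a - F adag - F' adag (a - adag)‖ ≤ L / 2 * t ^ 2 :=
    taylor_aux hD hF hLip hadag ha
  -- bound on ‖F'(a†)(a† - a)‖
  have hdir : ‖F' adag (adag - a)‖ ≤ s + δ + L / 2 * t ^ 2 := by
    have hid : F' adag (adag - a)
        = (F a - F adag - F' adag (a - adag)) - (F a - hδdata) - (hδdata - F adag) := by
      have : adag - a = -(a - adag) := by abel
      rw [this, map_neg]; abel
    rw [hid]
    calc ‖(F a - F adag - F' adag (a - adag)) - (F a - hδdata) - (hδdata - F adag)‖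
        ≤ ‖(F a - F adag - F' adag (a - adag)) - (F a - hδdata)‖ + ‖hδdata - F adag‖ :=
          norm_sub_le _ _
      _ ≤ ‖F a - F adag - F' adag (a - adag)‖ + ‖F a - hδdata‖ + ‖hδdata - F adag‖ := by
          have := norm_sub_le (F a - F adag - F' adag (a - adag)) (F a - hδdata)
          linarith
      _ ≤ L / 2 * t ^ 2 + s + δ := by rw [hs]; linarith [hT, hnoise]
      _ = s + δ + L / 2 * t ^ 2 := by ring
  -- source condition
  have hsrc : (inner ℝ (adag - a) (adag - astar) : ℝ)
      = inner ℝ (F' adag (adag - a)) w + inner ℝ (adag - a) e := by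
    rw [hsource, inner_add_right, ContinuousLinearMap.adjoint_inner_right]
  have hI1 : (inner ℝ (F' adag (adag - a)) w : ℝ) ≤ (s + δ + L / 2 * t ^ 2) * W := by
    calc (inner ℝ (F' adag (adag - a)) w : ℝ) ≤ ‖F' adag (adag - a)‖ * ‖w‖ :=
          real_inner_le_norm _ _
      _ ≤ (s + δ + L / 2 * t ^ 2) * W :=
          mul_le_mul_of_nonneg_right hdir (norm_nonneg w)
  have hI2 : (inner ℝ (adag - a) e : ℝ) ≤ t * E := by
    calc (inner ℝ (adag - a) e : ℝ) ≤ ‖adag - a‖ * ‖e‖ := real_inner_le_norm _ _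
      _ = t * E := by rw [norm_sub_rev, ht, hE]
  have hipbd : -ip ≤ (s + δ + L / 2 * t ^ 2) * W + t * E := by
    have hneg : -ip = inner ℝ (adag - a) (adag - astar) := by
      rw [hip, ← inner_neg_left]; congr 1; abel
    rw [hneg, hsrc]; exact add_le_add hI1 hI2
  -- key inequality
  have hkey : s ^ 2 + α * t ^ 2
      ≤ δ ^ 2 + 2 * α * ((s + δ + L / 2 * t ^ 2) * W + t * E) := by
    nlinarith [hq, mul_le_mul_of_nonneg_left hipbd (by positivity : (0:ℝ) ≤ 2 * α)]
  -- L‖w‖ ≤ ρ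
  have hB : α * (L * W) * t ^ 2 ≤ α * ρ * t ^ 2 := by
    have h := mul_le_mul_of_nonneg_left hLw (by positivity : (0:ℝ) ≤ α * t ^ 2)
    nlinarith [h]
  have hC' : α * σ * t ^ 2 ≤ δ ^ 2 + α ^ 2 * W ^ 2 + 2 * α * δ * W + 2 * α * t * E := by
    rw [hσdef]
    nlinarith [hkey, hB, sq_nonneg (s - α * W)]
  have hE4 : 4 * σ * (t * E) ≤ σ ^ 2 * t ^ 2 + 4 * E ^ 2 := by
    nlinarith [sq_nonneg (σ * t - 2 * E)]
  have hpoly : α * σ ^ 2 * t ^ 2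
      ≤ (4 * σ + 4) * (δ ^ 2 + α ^ 2 * W ^ 2 + α * δ * W + α * E ^ 2) := by
    nlinarith [mul_le_mul_of_nonneg_left hC' (by positivity : (0:ℝ) ≤ 2 * σ),
      mul_le_mul_of_nonneg_left hE4 hα.le,
      mul_nonneg (mul_nonneg hα.le hδ) (norm_nonneg w),
      sq_nonneg δ, sq_nonneg (α * W), mul_nonneg hα.le (sq_nonneg E),
      mul_nonneg hσ.le (sq_nonneg δ), mul_nonneg hσ.le (sq_nonneg (α * W)),
      mul_nonneg hσ.le (mul_nonneg (mul_nonneg hα.le hδ) (norm_nonneg w)),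
      mul_nonneg hσ.le (mul_nonneg hα.le (sq_nonneg E))]
  have hfin : t ^ 2 * (α * σ ^ 2)
      ≤ ((4 * σ + 4) / σ ^ 2 * (δ ^ 2 / α + α * W ^ 2 + δ * W + E ^ 2)) * (α * σ ^ 2) := by
    have heq : ((4 * σ + 4) / σ ^ 2 * (δ ^ 2 / α + α * W ^ 2 + δ * W + E ^ 2)) * (α * σ ^ 2)
        = (4 * σ + 4) * (δ ^ 2 + α ^ 2 * W ^ 2 + α * δ * W + α * E ^ 2) := by
      field_simp
    rw [heq]
    nlinarith [hpoly]
  exact le_of_mul_le_mul_right hfin (by positivity)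
end
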